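/- For a Lie algebroid (E, [·,·], ρ) of rank r over a manifold M, given local frames X₁,…,X_n of TM and e₁,…,e_r of E, the function e ↦ div(ρ(e)) − div^{(1)}(e) (where [e, e₁∧…∧e_r] = div^{(1)}(e) e₁∧…∧e_r and [ρ(e), X₁∧…∧X_n] = div(ρ(e)) X₁∧…∧X_n) defines a 1-cocycle for the Lie algebroid differential, i.e. ω([e,f]) = ρ(e)[ω(f)] − ρ(f)[ω(e)] for all sections e, f of E. -/

import Mathlib

open scoped BigOperators

lemma div_repr {K R M L : Type} [Field K] [CommRing R] [Algebra K R]
    [AddCommGroup M] [Module R M] {ι : Type} [Fintype ι] [DecidableEq ι]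
    (b : Module.Basis ι R M) (ρ : L → Derivation K R R) (act : L → M →+ M)
    (hleib : ∀ e (s : R) m, act e (s • m) = s • act e m + (ρ e s) • m)
    (e : L) (m : M) (i : ι) :
    b.repr (act e m) i
      = (∑ j, b.repr m j * b.repr (act e (b j)) i) + ρ e (b.repr m i) := by
  conv_lhs => rw [← b.sum_repr m, map_sum]
  simp only [hleib, map_sum, map_add, map_smul, Finsupp.coe_add, Finsupp.coe_smul,
    Finset.sum_apply', Pi.add_apply, Pi.smul_apply, smul_eq_mul, Module.Basis.repr_self,
    Finsupp.single_apply, Finset.sum_add_distrib]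
  congr 1
  simp [mul_ite, Finset.sum_ite_eq']

lemma div_cocycle {K R M L : Type} [Field K] [CommRing R] [Algebra K R]
    [AddCommGroup M] [Module R M] {ι : Type} [Fintype ι] [DecidableEq ι]
    (b : Module.Basis ι R M) (ρ : L → Derivation K R R) (act : L → M →+ M)
    (hleib : ∀ e (s : R) m, act e (s • m) = s • act e m + (ρ e s) • m)
    (e f : L) :
    ∑ k, b.repr (act e (act f (b k)) - act f (act e (b k))) k
      = ρ e (∑ k, b.repr (act f (b k)) k) - ρ f (∑ k, b.repr (act e (b k)) k) := by
  have h : ∀ k, b.repr (act e (act f (b k)) - act f (act e (b k))) k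
      = ((∑ j, b.repr (act f (b k)) j * b.repr (act e (b j)) k)
          - ∑ j, b.repr (act e (b k)) j * b.repr (act f (b j)) k)
        + (ρ e (b.repr (act f (b k)) k) - ρ f (b.repr (act e (b k)) k)) := by
    intro k
    rw [map_sub, Finsupp.sub_apply, div_repr b ρ act hleib e (act f (b k)) k, div_repr b ρ act hleib f (act e (b k)) k]
    ring
  rw [Finset.sum_congr rfl (fun k _ => h k), Finset.sum_add_distrib,
    Finset.sum_sub_distrib, Finset.sum_sub_distrib, map_sum, map_sum]
  have : (∑ k, ∑ j, b.repr (act f (b k)) j * b.repr (act e (b j)) k)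
      = ∑ k, ∑ j, b.repr (act e (b k)) j * b.repr (act f (b j)) k := by
    rw [Finset.sum_comm]
    exact Finset.sum_congr rfl fun k _ => Finset.sum_congr rfl fun j _ => mul_comm _ _
  rw [this]; ring

/-- for a Lie algebroid `(E, [·,·], ρ)` of rank `r` over a manifold
`M` (modeled algebraically: `R` is the ring of functions, `L` the module of
sections of `E`, the module of vector fields is `Derivation K R R`), given frames
(bases) `X` of the vector fields and `b` of `L`, the function
`ω(e) = div(ρ(e)) - div⁽¹⁾(e)`, where `div(ρ(e)) = ∑ᵢ ⟨Xⁱ, [ρ(e), Xᵢ]⟩` and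
`div⁽¹⁾(e) = ∑ₖ ⟨eᵏ, [e, eₖ]⟩` are the divergences with respect to those frames,
is a 1-cocycle for the Lie algebroid differential:
`ω([e,f]) = ρ(e)[ω(f)] - ρ(f)[ω(e)]`. -/
theorem stmt15 (K R L : Type) [Field K] [CommRing R] [Algebra K R]
    [LieRing L] [Module R L]
    (ρ : L →ₗ[R] Derivation K R R)
    -- Leibniz rule of the anchor
    (hanchor : ∀ (e f : L) (r : R), ⁅e, r • f⁆ = r • ⁅e, f⁆ + (ρ e r) • f)
    -- the anchor is bracket-preserving
    (hmor : ∀ e f : L, ρ ⁅e, f⁆ = ⁅ρ e, ρ f⁆)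
    (n r : ℕ) (X : Module.Basis (Fin n) R (Derivation K R R)) (b : Module.Basis (Fin r) R L)
    (ω : L → R)
    (hω : ∀ e : L,
      ω e = (∑ i : Fin n, (X.repr ⁅ρ e, X i⁆) i) - (∑ k : Fin r, (b.repr ⁅e, b k⁆) k)) :
    ∀ e f : L, ω ⁅e, f⁆ = ρ e (ω f) - ρ f (ω e) := by
  have hleib1 : ∀ (e : L) (s : R) (v : Derivation K R R),
      ⁅ρ e, s • v⁆ = s • ⁅ρ e, v⁆ + (ρ e s) • v := by
    intro e s v
    ext x
    simp only [Derivation.commutator_apply, Derivation.add_apply, Derivation.smul_apply,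
      Derivation.leibniz, smul_eq_mul]
    ring
  intro e f
  have h1 := div_cocycle X (fun e => ρ e)
    (fun e => AddMonoidHom.mk' (fun v => ⁅ρ e, v⁆) (fun a c => lie_add (ρ e) a c))
    hleib1 e f
  have h2 := div_cocycle b (fun e => ρ e)
    (fun e => AddMonoidHom.mk' (fun g => ⁅e, g⁆) (fun a c => lie_add e a c))
    (fun e s m => hanchor e m s) e f
  simp only [AddMonoidHom.mk'_apply, map_sub, Finsupp.sub_apply, Finset.sum_sub_distrib] at h1 h2
  rw [hω ⁅e, f⁆, hω e, hω f, map_sub, map_sub]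
  simp only [hmor, lie_lie, map_sub, Finsupp.sub_apply, Finset.sum_sub_distrib]
  linear_combination h1 - h2
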